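/- For every homeomorphism g of [0,1]^d there exists a Borel set R ⊆ [0,1]^d with λ^d(R) = 1 such that for every subset N ⊆ R with λ^d(N) = 0, one has λ^d(g(N)) = 0. -/

import Mathlib

open MeasureTheory Metric Set Filter Topology

/-- The unit cube `[0,1]^d` in Euclidean space. -/
def cube (d : ℕ) : Set (EuclideanSpace ℝ (Fin d)) := {x | ∀ i, x i ∈ Icc (0 : ℝ) 1}

theorem cube_eq (d : ℕ) : cube d = (MeasurableEquiv.toLp 2 (Fin d → ℝ)).symm ⁻¹' (Set.pi univ fun _ => Icc (0:ℝ) 1) := by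
  ext x
  simp only [cube, mem_preimage, Set.mem_pi, mem_univ, forall_true_left, mem_setOf_eq]
  rfl

theorem cube_meas (d : ℕ) : MeasurableSet (cube d) := by
  rw [cube_eq]
  exact (MeasurableSet.univ_pi fun _ => measurableSet_Icc).preimage (MeasurableEquiv.measurable _)

theorem cube_vol (d : ℕ) : volume (cube d) = 1 := by
  rw [cube_eq, (EuclideanSpace.volume_preserving_symm_measurableEquiv_toLp (Fin d)).measure_preimage
    ((MeasurableSet.univ_pi fun _ => measurableSet_Icc).nullMeasurableSet)]
  rw [volume_pi_pi]
  simp [Real.volume_Icc]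

/-- For every homeomorphism `g` of `[0,1]^d` there is a Borel set `R ⊆ [0,1]^d`
of full Lebesgue measure such that `g` maps every Lebesgue null subset of `R`
to a Lebesgue null set. -/
theorem stmt17 (d : ℕ) (g : ↥(cube d) ≃ₜ ↥(cube d)) :
    ∃ R : Set ↥(cube d), MeasurableSet R ∧
      volume ((↑) '' R : Set (EuclideanSpace ℝ (Fin d))) = 1 ∧
      ∀ N : Set ↥(cube d), N ⊆ R →
        volume ((↑) '' N : Set (EuclideanSpace ℝ (Fin d))) = 0 →
        volume ((↑) '' (g '' N) : Set (EuclideanSpace ℝ (Fin d))) = 0 := by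
  have hcube : MeasurableSet (cube d) := cube_meas d
  have hemb : MeasurableEmbedding ((↑) : ↥(cube d) → EuclideanSpace ℝ (Fin d)) :=
    MeasurableEmbedding.subtype_coe hcube
  set μ : Measure ↥(cube d) := Measure.comap Subtype.val volume with hμ
  have hμapp : ∀ s : Set ↥(cube d), μ s = volume ((↑) '' s : Set (EuclideanSpace ℝ (Fin d))) :=
    fun s => hemb.comap_apply volume s
  have hμuniv : μ univ = 1 := by
    rw [hμapp, image_univ, Subtype.range_coe]; exact cube_vol d
  have hfin : IsFiniteMeasure μ := ⟨by rw [hμuniv]; exact ENNReal.one_lt_top⟩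
  set ν : Measure ↥(cube d) := μ.map g.symm with hν
  have hνapp : ∀ s : Set ↥(cube d), MeasurableSet s → ν s = μ (g '' s) := by
    intro s hs
    rw [hν, Measure.map_apply g.symm.continuous.measurable hs]
    congr 1
    ext x
    simp only [mem_preimage, Set.mem_image]
    constructor
    · intro h; exact ⟨g.symm x, h, by simp⟩
    · rintro ⟨y, hy, rfl⟩; simpa using hy
  have hνfin : IsFiniteMeasure ν := by
    refine ⟨?_⟩
    rw [hνapp univ MeasurableSet.univ, image_univ]
    have : range ⇑g = univ := g.surjective.range_eq
    rw [this, hμuniv]; exact ENNReal.one_lt_top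
  -- Lebesgue decomposition of ν wrt μ
  have hsing : ν.singularPart μ ⟂ₘ μ := Measure.mutuallySingular_singularPart ν μ
  obtain ⟨S, hSm, hS1, hS2⟩ := hsing
  refine ⟨S, hSm, ?_, ?_⟩
  · rw [← hμapp]
    have := measure_add_measure_compl (μ := μ) hSm
    rw [hμuniv, hS2, add_zero] at this
    exact this
  · intro N hNR hN0
    obtain ⟨M, hMsub, hMm, hM0⟩ := exists_measurable_superset_of_null (by rwa [← hμapp] at hN0 : μ N = 0)
    set N' : Set ↥(cube d) := M ∩ S with hN'
    have hN'm : MeasurableSet N' := hMm.inter hSm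
    have hNN' : N ⊆ N' := subset_inter hMsub hNR
    have hμN' : μ N' = 0 := le_antisymm (le_trans (measure_mono inter_subset_left) hM0.le) bot_le
    have hνN' : ν N' = 0 := by
      have hdec := ν.haveLebesgueDecomposition_add μ
      have h1 : (μ.withDensity (ν.rnDeriv μ)) N' = 0 :=
        (withDensity_absolutelyContinuous μ (ν.rnDeriv μ)) hμN'
      have h2 : (ν.singularPart μ) N' = 0 :=
        le_antisymm (le_trans (measure_mono (hN' ▸ inter_subset_right)) hS1.le) bot_le
      calc ν N' = (ν.singularPart μ + μ.withDensity (ν.rnDeriv μ)) N' := by rw [← hdec]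
        _ = 0 := by rw [Measure.add_apply, h1, h2, add_zero]
    have : volume ((↑) '' (g '' N') : Set (EuclideanSpace ℝ (Fin d))) = 0 := by
      rw [← hμapp, ← hνapp N' hN'm]; exact hνN'
    exact le_antisymm (le_trans (measure_mono (image_mono (image_mono hNN'))) this.le) bot_le
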